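/- Let A > 0 and B > 0 and define g : ℝ → ℝ by g(X) = X⁴ − A·X − B. Then g has exactly two real zeros D and C, they satisfy D < 0 < C, and for every X ∈ ℝ one has g(X) ≤ 0 if and only if D ≤ X ≤ C. -/
import Mathlib

/-- Factorization of the quartic once two roots are known. -/
lemma quartic_factor (A B D C : ℝ) (hD : D ^ 4 - A * D - B = 0)
    (hC : C ^ 4 - A * C - B = 0) (hDC : D < C) (X : ℝ) :
    X ^ 4 - A * X - B
      = (X - D) * (X - C) * (X ^ 2 + (D + C) * X + (D ^ 2 + D * C + C ^ 2)) := by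
  have hne : C - D ≠ 0 := sub_ne_zero.2 (ne_of_gt hDC)
  have hA' : A = (C + D) * (C ^ 2 + D ^ 2) := by
    have h1 : A * (C - D) = ((C + D) * (C ^ 2 + D ^ 2)) * (C - D) := by ring_nf; nlinarith [hD, hC]
    exact mul_right_cancel₀ hne h1
  have hB' : B = C ^ 4 - A * C := by linarith
  subst hA' hB'
  ring

/-- the quadratic factor is positive when `D < 0 < C`. -/
lemma quad_pos (D C X : ℝ) (hD : D < 0) (hC : 0 < C) :
    0 < X ^ 2 + (D + C) * X + (D ^ 2 + D * C + C ^ 2) := by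
  nlinarith [sq_nonneg (2 * X + D + C), sq_nonneg (D + C), mul_pos (neg_pos.2 hD) hC,
    sq_nonneg D, sq_nonneg C]

/-- for `A, B > 0`, the quartic `g(X) = X⁴ − A·X − B` has exactly two
real zeros `D < 0 < C`, and `g(X) ≤ 0` if and only if `D ≤ X ≤ C`. -/
theorem stmt8 (A B : ℝ) (hA : 0 < A) (hB : 0 < B) :
    ∃ D C : ℝ, D < 0 ∧ 0 < C ∧
      (D ^ 4 - A * D - B = 0) ∧ (C ^ 4 - A * C - B = 0) ∧
      (∀ X : ℝ, X ^ 4 - A * X - B = 0 → X = D ∨ X = C) ∧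
      (∀ X : ℝ, X ^ 4 - A * X - B ≤ 0 ↔ D ≤ X ∧ X ≤ C) := by
  set g : ℝ → ℝ := fun x => x ^ 4 - A * x - B with hg
  have hcont : Continuous g := by fun_prop
  set c : ℝ := A + B + 1 with hc
  have hc1 : 1 ≤ c := by simp [hc]; linarith
  have hgc : 0 ≤ g c := by
    simp only [hg, hc]
    nlinarith [sq_nonneg (A + B), sq_nonneg (A + B + 1)]
  have hgnc : 0 ≤ g (-c) := by
    simp only [hg, hc]
    nlinarith [sq_nonneg (A + B), sq_nonneg (A + B + 1)]
  have hg0 : g 0 < 0 := by simp [hg]; linarith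
  -- root C in (0, c]
  obtain ⟨C, hCmem, hCz⟩ : ∃ C ∈ Set.Icc (0 : ℝ) c, g C = 0 := by
    have := intermediate_value_Icc (by linarith : (0:ℝ) ≤ c) hcont.continuousOn
    have h0 : (0:ℝ) ∈ Set.Icc (g 0) (g c) := ⟨le_of_lt hg0, hgc⟩
    obtain ⟨x, hx, hx0⟩ := this h0
    exact ⟨x, hx, hx0⟩
  obtain ⟨D, hDmem, hDz⟩ : ∃ D ∈ Set.Icc (-c) (0 : ℝ), g D = 0 := by
    have := intermediate_value_Icc' (by linarith : (-c:ℝ) ≤ 0) hcont.continuousOn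
    have h0 : (0:ℝ) ∈ Set.Icc (g 0) (g (-c)) := ⟨le_of_lt hg0, hgnc⟩
    obtain ⟨x, hx, hx0⟩ := this h0
    exact ⟨x, hx, hx0⟩
  have hC0 : 0 < C := by
    rcases lt_or_eq_of_le hCmem.1 with h | h
    · exact h
    · exfalso; rw [← h] at hCz; rw [hCz] at hg0; exact lt_irrefl 0 hg0
  have hD0 : D < 0 := by
    rcases lt_or_eq_of_le hDmem.2 with h | h
    · exact h
    · exfalso; rw [h] at hDz; rw [hDz] at hg0; exact lt_irrefl 0 hg0
  have hDC : D < C := lt_trans hD0 hC0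
  have hDz' : D ^ 4 - A * D - B = 0 := hDz
  have hCz' : C ^ 4 - A * C - B = 0 := hCz
  have hfac := quartic_factor A B D C hDz' hCz' hDC
  refine ⟨D, C, hD0, hC0, hDz', hCz', ?_, ?_⟩
  · intro X hX
    rw [hfac X] at hX
    have hq := quad_pos D C X hD0 hC0
    rcases mul_eq_zero.1 hX with h | h
    · rcases mul_eq_zero.1 h with h' | h'
      · left; linarith [sub_eq_zero.1 h']
      · right; linarith [sub_eq_zero.1 h']
    · exact absurd h (ne_of_gt hq)
  · intro X
    have hq := quad_pos D C X hD0 hC0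
    rw [hfac X]
    constructor
    · intro h
      have hle : (X - D) * (X - C) ≤ 0 := by
        by_contra hcon
        push_neg at hcon
        nlinarith
      constructor
      · by_contra hx; push_neg at hx; nlinarith
      · by_contra hx; push_neg at hx; nlinarith
    · rintro ⟨h1, h2⟩
      have : (X - D) * (X - C) ≤ 0 := mul_nonpos_of_nonneg_of_nonpos (by linarith) (by linarith)
      nlinarith
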